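/- If s ∈ ℝ is not an eigenvalue of Λ (i.e., s ≠ λ_i for all i), then for every T ∈ 𝒯_Λ the matrix T − sI is invertible and F_s(T) ∈ 𝒯_Λ, and the map T ↦ F_s(T) is a bijection from 𝒯_Λ onto 𝒯_Λ. -/

import Mathlib

open Matrix Filter Topology

attribute [local instance] Matrix.normedAddCommGroup Matrix.normedSpace

noncomputable section

attribute [local instance] Classical.propDecidable

/-- The first `n+1` columns of the `(n+2)×(n+2)` matrix `M` are linearly independent,
i.e. `M` is *almost invertible*. -/
def AlmostInv {n : ℕ} (M : Matrix (Fin (n+2)) (Fin (n+2)) ℝ) : Prop :=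
  LinearIndependent ℝ (fun j : Fin (n+1) => fun i => M i j.castSucc)

/-- `M = Q⋆ R⋆` with `Q⋆` orthogonal of determinant one and `R⋆` upper triangular
with positive diagonal except possibly at the last entry. -/
def IsQsRs {n : ℕ} (M Q R : Matrix (Fin (n+2)) (Fin (n+2)) ℝ) : Prop :=
  Qᵀ * Q = 1 ∧ Q.det = 1 ∧ (∀ i j : Fin (n+2), j < i → R i j = 0) ∧
    (∀ i : Fin (n+1), 0 < R i.castSucc i.castSucc) ∧ M = Q * R

/-- `M = Q R` with `Q` orthogonal and `R` upper triangular with positive diagonal. -/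
def IsQR {n : ℕ} (M Q R : Matrix (Fin (n+2)) (Fin (n+2)) ℝ) : Prop :=
  Qᵀ * Q = 1 ∧ (∀ i j : Fin (n+2), j < i → R i j = 0) ∧
    (∀ i : Fin (n+2), 0 < R i i) ∧ M = Q * R

/-- `E_n = diag(1, …, 1, -1)`. -/
def En (n : ℕ) : Matrix (Fin (n+2)) (Fin (n+2)) ℝ :=
  Matrix.diagonal (fun i => if i = Fin.last (n+1) then -1 else 1)

/-- The signed shifted QR step `F_s(T) = Q⋆ᵀ T Q⋆` where `T - s I = Q⋆ R⋆`. -/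
def Fs {n : ℕ} (s : ℝ) (T : Matrix (Fin (n+2)) (Fin (n+2)) ℝ) :
    Matrix (Fin (n+2)) (Fin (n+2)) ℝ :=
  if h : ∃ Q R, IsQsRs (T - s • 1) Q R then (h.choose)ᵀ * T * h.choose else 0

/-- The (plain) shifted QR step `Φ(T, s) = Qᵀ T Q` where `T - s I = Q R`. -/
def Phi {n : ℕ} (T : Matrix (Fin (n+2)) (Fin (n+2)) ℝ) (s : ℝ) :
    Matrix (Fin (n+2)) (Fin (n+2)) ℝ :=
  if h : ∃ Q R, IsQR (T - s • 1) Q R then (h.choose)ᵀ * T * h.choose else 0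

/-- `T` is symmetric and tridiagonal. -/
def SymTridiag {n : ℕ} (T : Matrix (Fin (n+2)) (Fin (n+2)) ℝ) : Prop :=
  Tᵀ = T ∧ ∀ i j : Fin (n+2), (i.val + 1 < j.val ∨ j.val + 1 < i.val) → T i j = 0

/-- `b(T)`, the lowest subdiagonal entry `T_{n, n-1}` (1-based). -/
def lowb {n : ℕ} (T : Matrix (Fin (n+2)) (Fin (n+2)) ℝ) : ℝ :=
  T (Fin.last (n+1)) ⟨n, by omega⟩

/-- `T` is unreduced: all subdiagonal entries are nonzero. -/
def Unreduced {n : ℕ} (T : Matrix (Fin (n+2)) (Fin (n+2)) ℝ) : Prop :=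
  ∀ i : Fin (n+1), T i.succ i.castSucc ≠ 0

/-- `𝒯_Λ`: real symmetric tridiagonal matrices with the same characteristic polynomial
as `Λ = diagonal lam`. -/
def TSet {n : ℕ} (lam : Fin (n+2) → ℝ) : Set (Matrix (Fin (n+2)) (Fin (n+2)) ℝ) :=
  {T | SymTridiag T ∧ T.charpoly = (Matrix.diagonal lam).charpoly}

/-- The deflation neighborhood `D^i_{Λ,ε}`. -/
def Dset {n : ℕ} (lam : Fin (n+2) → ℝ) (ε : ℝ) (i : Fin (n+2)) :
    Set (Matrix (Fin (n+2)) (Fin (n+2)) ℝ) :=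
  {T ∈ TSet lam | |lowb T| ≤ ε ∧
    |T (Fin.last (n+1)) (Fin.last (n+1)) - lam i| ≤ Real.sqrt 2 * ε}

/-- The deflation set `D^i_{Λ,0}`. -/
def D0 {n : ℕ} (lam : Fin (n+2) → ℝ) (i : Fin (n+2)) :
    Set (Matrix (Fin (n+2)) (Fin (n+2)) ℝ) :=
  {T ∈ TSet lam | lowb T = 0 ∧ T (Fin.last (n+1)) (Fin.last (n+1)) = lam i}

/-- The deflation domain `D^i_Λ`: matrices `T ∈ 𝒯_Λ` with `T - λ_i I` almost invertible. -/
def DD {n : ℕ} (lam : Fin (n+2) → ℝ) (i : Fin (n+2)) :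
    Set (Matrix (Fin (n+2)) (Fin (n+2)) ℝ) :=
  {T ∈ TSet lam | AlmostInv (T - lam i • 1)}

/-- A simple shift strategy. -/
def SimpleShift {n : ℕ} (lam : Fin (n+2) → ℝ)
    (σ : Matrix (Fin (n+2)) (Fin (n+2)) ℝ → ℝ) : Prop :=
  (∀ T ∈ TSet lam, σ (En n * T * En n) = σ T) ∧
  ∃ C > 0, ∀ T ∈ TSet lam, ∃ i : Fin (n+2), |σ T - lam i| ≤ C * |lowb T|

/-- The vector space of real symmetric tridiagonal matrices. -/
def STSpace (n : ℕ) : Submodule ℝ (Matrix (Fin (n+2)) (Fin (n+2)) ℝ) where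
  carrier := {T | SymTridiag T}
  add_mem' := by
    rintro a b ⟨ha1, ha2⟩ ⟨hb1, hb2⟩
    refine ⟨by rw [Matrix.transpose_add, ha1, hb1], fun i j h => ?_⟩
    simp [Matrix.add_apply, ha2 i j h, hb2 i j h]
  zero_mem' := ⟨Matrix.transpose_zero, fun i j _ => rfl⟩
  smul_mem' := by
    rintro c a ⟨ha1, ha2⟩
    refine ⟨by rw [Matrix.transpose_smul, ha1], fun i j h => ?_⟩
    simp [Matrix.smul_apply, ha2 i j h]

/-- `σ` is smooth near `A ⊆ 𝒯_Λ`: there are an open subset `U` of the vector space of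
symmetric tridiagonal matrices containing `A` and a `C^∞` function on `U` agreeing with
`σ` on `U ∩ 𝒯_Λ`. -/
def SmoothNear {n : ℕ} (lam : Fin (n+2) → ℝ)
    (σ : Matrix (Fin (n+2)) (Fin (n+2)) ℝ → ℝ)
    (A : Set (Matrix (Fin (n+2)) (Fin (n+2)) ℝ)) : Prop :=
  ∃ (U : Set (STSpace n)) (σt : STSpace n → ℝ),
    IsOpen U ∧
    (∀ T : STSpace n, (T : Matrix (Fin (n+2)) (Fin (n+2)) ℝ) ∈ A → T ∈ U) ∧
    ContDiffOn ℝ (⊤ : ℕ∞) σt U ∧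
    ∀ T : STSpace n, T ∈ U → (T : Matrix (Fin (n+2)) (Fin (n+2)) ℝ) ∈ TSet lam →
      σt T = σ (T : Matrix (Fin (n+2)) (Fin (n+2)) ℝ)

/-- The Frobenius norm `‖A‖ = √(trace(Aᵀ A))`. -/
def frobNorm {n : ℕ} (A : Matrix (Fin (n+2)) (Fin (n+2)) ℝ) : ℝ :=
  Real.sqrt (Matrix.trace (Aᵀ * A))

end

section QRhelpers

open Matrix Finset
open scoped RealInnerProductSpace
open InnerProductSpace

/-- Existence of a QR factorization for a real matrix with unit determinant. -/
lemma qr_exists {m : ℕ} (A : Matrix (Fin m) (Fin m) ℝ) (hA : IsUnit A.det) :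
    ∃ Q R : Matrix (Fin m) (Fin m) ℝ,
      Qᵀ * Q = 1 ∧ (∀ i j, j < i → R i j = 0) ∧ (∀ i, 0 < R i i) ∧ A = Q * R := by
  classical
  set e : EuclideanSpace ℝ (Fin m) ≃ₗ[ℝ] (Fin m → ℝ) := WithLp.linearEquiv 2 ℝ (Fin m → ℝ)
  set f : Fin m → EuclideanSpace ℝ (Fin m) := fun j => e.symm (Aᵀ j) with hfdef
  have hli0 : LinearIndependent ℝ (fun j => Aᵀ j) :=
    Matrix.linearIndependent_cols_iff_isUnit.2 ((Matrix.isUnit_iff_isUnit_det A).2 hA)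
  have hli : LinearIndependent ℝ f := by
    have := hli0.map' e.symm.toLinearMap e.symm.ker
    exact this
  have hcard : Module.finrank ℝ (EuclideanSpace ℝ (Fin m)) = Fintype.card (Fin m) := by
    simp [finrank_euclideanSpace]
  letI i1 : LinearOrder (Fin m) := inferInstance
  letI i2 : LocallyFiniteOrderBot (Fin m) := inferInstance
  letI i3 : WellFoundedLT (Fin m) := inferInstance
  set g : OrthonormalBasis (Fin m) ℝ (EuclideanSpace ℝ (Fin m)) := by exact gramSchmidtOrthonormalBasis hcard f with hg
  refine ⟨Matrix.of (fun i j => g j i), Matrix.of (fun j k => ⟪g j, f k⟫), ?_, ?_, ?_, ?_⟩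
  · ext j k
    have h1 : ∀ x y : EuclideanSpace ℝ (Fin m), ⟪x, y⟫ = ∑ i, x i * y i := by
      intro x y
      rw [PiLp.inner_apply]
      simp [RCLike.inner_apply, mul_comm]
    have h2 := g.orthonormal
    rw [orthonormal_iff_ite] at h2
    have := h2 j k
    rw [h1] at this
    simp only [Matrix.mul_apply, Matrix.transpose_apply, Matrix.of_apply, Matrix.one_apply]
    rw [← this]
  · intro j k h
    exact gramSchmidtOrthonormalBasis_inv_triangular hcard f h
  · intro j
    have hgsne : gramSchmidt ℝ f j ≠ 0 := gramSchmidt_ne_zero _ hli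
    have hnorm : (0:ℝ) < ‖gramSchmidt ℝ f j‖ := norm_pos_iff.2 hgsne
    have hne : gramSchmidtNormed ℝ f j ≠ 0 := by
      rw [gramSchmidtNormed]
      exact smul_ne_zero (by positivity) hgsne
    have happ : g j = gramSchmidtNormed ℝ f j := gramSchmidtOrthonormalBasis_apply hcard hne
    have hinner : ⟪gramSchmidt ℝ f j, f j⟫ = ‖gramSchmidt ℝ f j‖ ^ 2 := by
      conv_lhs => rw [gramSchmidt_def'' ℝ f j]
      rw [inner_add_right, inner_sum, real_inner_self_eq_norm_sq]
      exact add_eq_left.mpr (Finset.sum_eq_zero fun i hi => by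
        rw [real_inner_smul_right, gramSchmidt_orthogonal ℝ f (Finset.mem_Iio.1 hi).ne',
          mul_zero])
    have : (Matrix.of (fun j k => ⟪g j, f k⟫)) j j
        = ‖gramSchmidt ℝ f j‖⁻¹ * ‖gramSchmidt ℝ f j‖ ^ 2 := by
      simp only [Matrix.of_apply, happ, gramSchmidtNormed]
      rw [real_inner_smul_left, hinner]
      norm_cast
    rw [this]
    positivity
  · ext i k
    rw [Matrix.mul_apply]
    have hrepr := g.sum_repr' (f k)
    have h2 := congrArg (fun v : EuclideanSpace ℝ (Fin m) => v i) hrepr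
    simp only at h2
    have h3 : A i k = f k i := rfl
    rw [h3, ← h2, show ∀ v : Fin m → EuclideanSpace ℝ (Fin m), (∑ j, v j) i = ∑ j, v j i from
      fun v => by simp]
    refine Finset.sum_congr rfl fun j _ => ?_
    simp only [Matrix.of_apply, PiLp.smul_apply, smul_eq_mul]
    ring

end QRhelpers

section MainHelpers

open Matrix Finset Polynomial

variable {n : ℕ}

lemma upper_bt {R : Matrix (Fin (n+2)) (Fin (n+2)) ℝ} (h : ∀ i j, j < i → R i j = 0) :
    R.BlockTriangular id := fun i j hij => h i j hij

lemma offdiag_zero_of_upper_orth {D : Matrix (Fin (n+2)) (Fin (n+2)) ℝ}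
    (ho : Dᵀ * D = 1) (hu : ∀ i j : Fin (n+2), j < i → D i j = 0) :
    ∀ i j : Fin (n+2), i ≠ j → D i j = 0 := by
  haveI : Invertible D := invertibleOfLeftInverse _ _ ho
  have hDi : D⁻¹ = Dᵀ := Matrix.inv_eq_left_inv ho
  have hbt2 : (D⁻¹).BlockTriangular id :=
    Matrix.blockTriangular_inv_of_blockTriangular (upper_bt hu)
  intro i j hij
  rcases lt_or_gt_of_ne hij with h | h
  · have h2 : D⁻¹ j i = 0 := hbt2 h
    rw [hDi, Matrix.transpose_apply] at h2
    exact h2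
  · exact hu i j h

lemma upper_orth_eq_one {D : Matrix (Fin (n+2)) (Fin (n+2)) ℝ}
    (ho : Dᵀ * D = 1) (hu : ∀ i j : Fin (n+2), j < i → D i j = 0)
    (hdet : D.det = 1) (hpos : ∀ i : Fin (n+1), 0 < D i.castSucc i.castSucc) :
    D = 1 := by
  have hz := offdiag_zero_of_upper_orth ho hu
  have hsq : ∀ i, D i i * D i i = 1 := by
    intro i
    have h1 : (Dᵀ * D) i i = (1 : Matrix (Fin (n+2)) (Fin (n+2)) ℝ) i i := by rw [ho]
    rw [Matrix.mul_apply, Matrix.one_apply_eq,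
      Finset.sum_eq_single i (fun k _ hk => by
        rw [Matrix.transpose_apply, hz k i hk, mul_zero])
      (fun h => absurd (Finset.mem_univ i) h), Matrix.transpose_apply] at h1
    exact h1
  have h1 : ∀ i : Fin (n+1), D i.castSucc i.castSucc = 1 := by
    intro i
    rcases mul_self_eq_one_iff.mp (hsq i.castSucc) with h | h
    · exact h
    · exact absurd (hpos i) (by rw [h]; norm_num)
  have hdd : D = Matrix.diagonal (fun i => D i i) := by
    ext i j
    by_cases h : i = j
    · subst h; rw [Matrix.diagonal_apply_eq]
    · rw [Matrix.diagonal_apply_ne _ h, hz i j h]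
  have hlast : D (Fin.last (n+1)) (Fin.last (n+1)) = 1 := by
    rw [hdd, Matrix.det_diagonal, Fin.prod_univ_castSucc] at hdet
    simpa [h1] using hdet
  ext i j
  by_cases h : i = j
  · subst h
    rcases Fin.eq_castSucc_or_eq_last i with ⟨k, rfl⟩ | rfl
    · rw [Matrix.one_apply_eq, h1]
    · rw [Matrix.one_apply_eq, hlast]
  · rw [Matrix.one_apply_ne h, hz i j h]

lemma qsrs_unique {M Q1 R1 Q2 R2 : Matrix (Fin (n+2)) (Fin (n+2)) ℝ}
    (hM : IsUnit M.det) (h1 : IsQsRs M Q1 R1) (h2 : IsQsRs M Q2 R2) :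
    Q1 = Q2 ∧ R1 = R2 := by
  obtain ⟨ho1, hd1, hu1, hp1, he1⟩ := h1
  obtain ⟨ho2, hd2, hu2, hp2, he2⟩ := h2
  have ho2' : Q2 * Q2ᵀ = 1 := mul_eq_one_comm.mp ho2
  set D := Q2ᵀ * Q1 with hD
  have hDo : Dᵀ * D = 1 := by
    rw [hD, Matrix.transpose_mul, Matrix.transpose_transpose]
    simp only [Matrix.mul_assoc]
    rw [← Matrix.mul_assoc Q2 Q2ᵀ Q1, ho2', Matrix.one_mul, ho1]
  have hDR : D * R1 = R2 := by
    rw [hD, Matrix.mul_assoc, ← he1, he2, ← Matrix.mul_assoc, ho2, Matrix.one_mul]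
  have hdR1 : IsUnit R1.det := by
    have h5 : M.det = R1.det := by rw [he1, Matrix.det_mul, hd1, one_mul]
    rwa [h5] at hM
  haveI : Invertible R1 := Matrix.invertibleOfIsUnitDet _ hdR1
  have hDu : ∀ i j : Fin (n+2), j < i → D i j = 0 := by
    have hDe : D = R2 * R1⁻¹ := by
      rw [← hDR, Matrix.mul_inv_cancel_right_of_invertible]
    have hbt : D.BlockTriangular id := by
      rw [hDe]
      exact (upper_bt hu2).mul (Matrix.blockTriangular_inv_of_blockTriangular (upper_bt hu1))
    exact fun i j h => hbt h
  have hz := offdiag_zero_of_upper_orth hDo hDu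
  have hpos : ∀ i : Fin (n+1), 0 < D i.castSucc i.castSucc := by
    intro i
    have h3 : (D * R1) i.castSucc i.castSucc = R2 i.castSucc i.castSucc := by rw [hDR]
    rw [Matrix.mul_apply, Finset.sum_eq_single i.castSucc
      (fun k _ hk => by rw [hz i.castSucc k (Ne.symm hk), zero_mul])
      (fun h => absurd (Finset.mem_univ _) h)] at h3
    nlinarith [hp1 i, hp2 i]
  have hdd : D.det = 1 := by
    rw [hD, Matrix.det_mul, Matrix.det_transpose, hd1, hd2, one_mul]
  have hD1 : D = 1 := upper_orth_eq_one hDo hDu hdd hpos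
  constructor
  · have h6 : Q2 * D = Q1 := by
      rw [hD, ← Matrix.mul_assoc, ho2', Matrix.one_mul]
    rw [hD1, Matrix.mul_one] at h6
    exact h6.symm
  · rw [hD1, Matrix.one_mul] at hDR
    exact hDR

lemma rq_unique {Q1 R1 Q2 R2 : Matrix (Fin (n+2)) (Fin (n+2)) ℝ}
    (hdet : IsUnit (R1 * Q1).det)
    (ho1 : Q1ᵀ * Q1 = 1) (hd1 : Q1.det = 1) (hu1 : ∀ i j : Fin (n+2), j < i → R1 i j = 0)
    (hp1 : ∀ i : Fin (n+1), 0 < R1 i.castSucc i.castSucc)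
    (ho2 : Q2ᵀ * Q2 = 1) (hd2 : Q2.det = 1) (hu2 : ∀ i j : Fin (n+2), j < i → R2 i j = 0)
    (hp2 : ∀ i : Fin (n+1), 0 < R2 i.castSucc i.castSucc)
    (heq : R1 * Q1 = R2 * Q2) : Q1 = Q2 ∧ R1 = R2 := by
  have ho2' : Q2 * Q2ᵀ = 1 := mul_eq_one_comm.mp ho2
  set D := Q1 * Q2ᵀ with hD
  have hDo : Dᵀ * D = 1 := by
    rw [hD, Matrix.transpose_mul, Matrix.transpose_transpose]
    simp only [Matrix.mul_assoc]
    rw [← Matrix.mul_assoc Q1ᵀ Q1 Q2ᵀ, ho1, Matrix.one_mul, ho2']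
  have hDR : R1 * D = R2 := by
    rw [hD, ← Matrix.mul_assoc, heq, Matrix.mul_assoc, ho2', Matrix.mul_one]
  have hdR1 : IsUnit R1.det := by
    have h5 : (R1 * Q1).det = R1.det := by rw [Matrix.det_mul, hd1, mul_one]
    rwa [h5] at hdet
  haveI : Invertible R1 := Matrix.invertibleOfIsUnitDet _ hdR1
  have hDu : ∀ i j : Fin (n+2), j < i → D i j = 0 := by
    have hDe : D = R1⁻¹ * R2 := by
      rw [← hDR, Matrix.inv_mul_cancel_left_of_invertible]
    have hbt : D.BlockTriangular id := by
      rw [hDe]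
      exact (Matrix.blockTriangular_inv_of_blockTriangular (upper_bt hu1)).mul (upper_bt hu2)
    exact fun i j h => hbt h
  have hz := offdiag_zero_of_upper_orth hDo hDu
  have hpos : ∀ i : Fin (n+1), 0 < D i.castSucc i.castSucc := by
    intro i
    have h3 : (R1 * D) i.castSucc i.castSucc = R2 i.castSucc i.castSucc := by rw [hDR]
    rw [Matrix.mul_apply, Finset.sum_eq_single i.castSucc
      (fun k _ hk => by rw [hz k i.castSucc hk, mul_zero])
      (fun h => absurd (Finset.mem_univ _) h)] at h3
    nlinarith [hp1 i, hp2 i]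
  have hdd : D.det = 1 := by
    rw [hD, Matrix.det_mul, Matrix.det_transpose, hd1, hd2, one_mul]
  have hD1 : D = 1 := upper_orth_eq_one hDo hDu hdd hpos
  constructor
  · have h6 : D * Q2 = Q1 := by
      rw [hD, Matrix.mul_assoc, ho2, Matrix.mul_one]
    rw [hD1, Matrix.one_mul] at h6
    exact h6.symm
  · rw [hD1, Matrix.mul_one] at hDR
    exact hDR

lemma En_transpose : (En n)ᵀ = En n := Matrix.diagonal_transpose _

lemma En_mul_En : En n * En n = 1 := by
  have h : (fun i : Fin (n+2) =>
      (if i = Fin.last (n+1) then (-1:ℝ) else 1) * (if i = Fin.last (n+1) then (-1:ℝ) else 1))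
      = fun _ => (1:ℝ) := by
    funext i; by_cases h : i = Fin.last (n+1) <;> simp [h]
  rw [En, Matrix.diagonal_mul_diagonal, h, Matrix.diagonal_one]

lemma En_det : (En n).det = -1 := by
  rw [En, Matrix.det_diagonal, Fin.prod_univ_castSucc]
  have h1 : ∀ i : Fin (n+1),
      (if (i.castSucc : Fin (n+2)) = Fin.last (n+1) then (-1:ℝ) else 1) = 1 :=
    fun i => if_neg (Fin.castSucc_lt_last i).ne
  simp [h1]

lemma exists_isQsRs {M : Matrix (Fin (n+2)) (Fin (n+2)) ℝ} (hM : IsUnit M.det) :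
    ∃ Q R, IsQsRs M Q R := by
  obtain ⟨Q, R, ho, hu, hp, he⟩ := qr_exists M hM
  have hdQ : Q.det = 1 ∨ Q.det = -1 := by
    have h1 : Q.det * Q.det = 1 := by
      have h2 := congrArg Matrix.det ho
      rwa [Matrix.det_mul, Matrix.det_transpose, Matrix.det_one] at h2
    exact mul_self_eq_one_iff.mp h1
  rcases hdQ with hdQ | hdQ
  · exact ⟨Q, R, ho, hdQ, hu, fun i => hp i.castSucc, he⟩
  · refine ⟨Q * En n, En n * R, ?_, ?_, ?_, ?_, ?_⟩
    · rw [Matrix.transpose_mul, En_transpose, Matrix.mul_assoc,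
        ← Matrix.mul_assoc Qᵀ Q (En n), ho, Matrix.one_mul, En_mul_En]
    · rw [Matrix.det_mul, hdQ, En_det]; norm_num
    · intro i j h
      rw [En, Matrix.diagonal_mul, hu i j h, mul_zero]
    · intro i
      have h2 : (En n * R) i.castSucc i.castSucc = R i.castSucc i.castSucc := by
        rw [En, Matrix.diagonal_mul, if_neg (Fin.castSucc_lt_last i).ne, one_mul]
      rw [h2]; exact hp _
    · rw [Matrix.mul_assoc, ← Matrix.mul_assoc (En n) (En n) R, En_mul_En,
        Matrix.one_mul]
      exact he

lemma rq_exists {M : Matrix (Fin (n+2)) (Fin (n+2)) ℝ} (hM : IsUnit M.det)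
    (hsym : Mᵀ = M) :
    ∃ R Q : Matrix (Fin (n+2)) (Fin (n+2)) ℝ,
      Qᵀ * Q = 1 ∧ Q.det = 1 ∧ (∀ i j : Fin (n+2), j < i → R i j = 0) ∧
      (∀ i : Fin (n+1), 0 < R i.castSucc i.castSucc) ∧ M = R * Q := by
  classical
  have hNdet : IsUnit (M.submatrix (⇑(Fin.revPerm : Equiv.Perm (Fin (n+2))))
      (⇑(Fin.revPerm : Equiv.Perm (Fin (n+2))))).det := by
    rw [Matrix.det_submatrix_equiv_self]; exact hM
  obtain ⟨Q0, R0, ho0, hu0, hp0, he0⟩ := qr_exists _ hNdet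
  have hM2 : M = Q0.submatrix (⇑(Fin.revPerm : Equiv.Perm (Fin (n+2)))) Fin.revPerm *
      R0.submatrix (⇑(Fin.revPerm : Equiv.Perm (Fin (n+2)))) Fin.revPerm := by
    rw [Matrix.submatrix_mul_equiv]
    rw [← he0]
    ext i j
    simp [Matrix.submatrix_apply]
  set Q1 : Matrix (Fin (n+2)) (Fin (n+2)) ℝ :=
    (Q0.submatrix (⇑(Fin.revPerm : Equiv.Perm (Fin (n+2)))) Fin.revPerm)ᵀ with hQ1
  set R1 : Matrix (Fin (n+2)) (Fin (n+2)) ℝ :=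
    (R0.submatrix (⇑(Fin.revPerm : Equiv.Perm (Fin (n+2)))) Fin.revPerm)ᵀ with hR1
  have hM3 : M = R1 * Q1 := by
    have h2 := congrArg Matrix.transpose hM2
    rw [hsym, Matrix.transpose_mul] at h2
    exact h2
  have hQ1o : Q1ᵀ * Q1 = 1 := by
    rw [hQ1, Matrix.transpose_transpose, Matrix.transpose_submatrix,
      Matrix.submatrix_mul_equiv, mul_eq_one_comm.mp ho0,
      Matrix.submatrix_one_equiv]
  have hQ1d : Q1.det = 1 ∨ Q1.det = -1 := by
    have h1 : Q1.det * Q1.det = 1 := by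
      have h2 := congrArg Matrix.det hQ1o
      rwa [Matrix.det_mul, Matrix.det_transpose, Matrix.det_one] at h2
    exact mul_self_eq_one_iff.mp h1
  have hR1u : ∀ i j : Fin (n+2), j < i → R1 i j = 0 := by
    intro i j hij
    rw [hR1, Matrix.transpose_apply, Matrix.submatrix_apply]
    exact hu0 _ _ (by simpa [Fin.rev_lt_rev] using hij)
  have hR1p : ∀ i : Fin (n+2), 0 < R1 i i := by
    intro i
    rw [hR1, Matrix.transpose_apply, Matrix.submatrix_apply]
    exact hp0 _
  rcases hQ1d with hd | hd
  · exact ⟨R1, Q1, hQ1o, hd, hR1u, fun i => hR1p _, hM3⟩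
  · refine ⟨R1 * En n, En n * Q1, ?_, ?_, ?_, ?_, ?_⟩
    · rw [Matrix.transpose_mul, En_transpose, Matrix.mul_assoc,
        ← Matrix.mul_assoc (En n) (En n) Q1, En_mul_En, Matrix.one_mul, hQ1o]
    · rw [Matrix.det_mul, En_det, hd]; norm_num
    · intro i j h
      rw [En, Matrix.mul_diagonal, hR1u i j h, zero_mul]
    · intro i
      rw [En, Matrix.mul_diagonal, if_neg (Fin.castSucc_lt_last i).ne, mul_one]
      exact hR1p _
    · rw [Matrix.mul_assoc, ← Matrix.mul_assoc (En n) (En n) Q1, En_mul_En, Matrix.one_mul]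
      exact hM3

open Polynomial in
lemma charpoly_conj {Q T : Matrix (Fin (n+2)) (Fin (n+2)) ℝ} (hQ : Qᵀ * Q = 1) :
    (Qᵀ * T * Q).charpoly = T.charpoly := by
  classical
  have hC1 : Qᵀ.map (⇑(C : ℝ →+* ℝ[X])) * Q.map (⇑(C : ℝ →+* ℝ[X])) = 1 := by
    rw [← Matrix.map_mul, hQ, Matrix.map_one _ (map_zero C) (map_one C)]
  have hscalar : Qᵀ.map (⇑(C : ℝ →+* ℝ[X])) * Matrix.scalar (Fin (n+2)) (X : ℝ[X]) *
      Q.map (⇑(C : ℝ →+* ℝ[X])) = Matrix.scalar (Fin (n+2)) (X : ℝ[X]) := by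
    have hcomm : Qᵀ.map (⇑(C : ℝ →+* ℝ[X])) * Matrix.scalar (Fin (n+2)) (X : ℝ[X]) =
        Matrix.scalar (Fin (n+2)) (X : ℝ[X]) * Qᵀ.map (⇑(C : ℝ →+* ℝ[X])) :=
      ((Matrix.scalar_commute (X : ℝ[X]) (fun r' => mul_comm _ _) _)).eq.symm
    rw [hcomm, Matrix.mul_assoc, hC1, Matrix.mul_one]
  have hkey : Matrix.charmatrix (Qᵀ * T * Q) =
      Qᵀ.map (⇑(C : ℝ →+* ℝ[X])) * Matrix.charmatrix T * Q.map (⇑(C : ℝ →+* ℝ[X])) := by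
    simp only [Matrix.charmatrix, RingHom.mapMatrix_apply]
    rw [Matrix.mul_sub, Matrix.sub_mul, hscalar, ← Matrix.map_mul, ← Matrix.map_mul]
  rw [Matrix.charpoly, Matrix.charpoly, hkey, Matrix.det_mul, Matrix.det_mul]
  have hd1 : (Qᵀ.map (⇑(C : ℝ →+* ℝ[X]))).det * (Q.map (⇑(C : ℝ →+* ℝ[X]))).det = 1 := by
    rw [← Matrix.det_mul, hC1, Matrix.det_one]
  calc (Qᵀ.map (⇑(C : ℝ →+* ℝ[X]))).det * (Matrix.charmatrix T).det *
      (Q.map (⇑(C : ℝ →+* ℝ[X]))).det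
      = (Matrix.charmatrix T).det * ((Qᵀ.map (⇑(C : ℝ →+* ℝ[X]))).det *
        (Q.map (⇑(C : ℝ →+* ℝ[X]))).det) := by ring
    _ = (Matrix.charmatrix T).det := by rw [hd1, mul_one]

open Polynomial in
lemma det_unit_of_charpoly {lam : Fin (n+2) → ℝ} {s : ℝ} (hs : ∀ i, s ≠ lam i)
    {T : Matrix (Fin (n+2)) (Fin (n+2)) ℝ}
    (hT : T.charpoly = (Matrix.diagonal lam).charpoly) :
    IsUnit (T - s • (1 : Matrix (Fin (n+2)) (Fin (n+2)) ℝ)).det := by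
  classical
  have heval : ∀ A : Matrix (Fin (n+2)) (Fin (n+2)) ℝ,
      A.charpoly.eval s = (s • (1 : Matrix (Fin (n+2)) (Fin (n+2)) ℝ) - A).det := by
    intro A
    rw [Matrix.charpoly, ← Polynomial.coe_evalRingHom, RingHom.map_det]
    congr 1
    ext i j
    by_cases h : i = j
    · subst h
      rw [RingHom.mapMatrix_apply, Matrix.map_apply, Matrix.charmatrix_apply_eq]
      simp [Matrix.sub_apply, Matrix.smul_apply, Matrix.one_apply_eq]
    · rw [RingHom.mapMatrix_apply, Matrix.map_apply, Matrix.charmatrix_apply_ne _ _ _ h]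
      simp [Matrix.sub_apply, Matrix.smul_apply, Matrix.one_apply_ne h]
  have h1 : (s • (1 : Matrix (Fin (n+2)) (Fin (n+2)) ℝ) - Matrix.diagonal lam).det ≠ 0 := by
    have h2 : s • (1 : Matrix (Fin (n+2)) (Fin (n+2)) ℝ) - Matrix.diagonal lam
        = Matrix.diagonal (fun i => s - lam i) := by
      ext i j
      by_cases h : i = j
      · subst h; simp
      · simp [Matrix.diagonal_apply_ne _ h, Matrix.one_apply_ne h]
    rw [h2, Matrix.det_diagonal]
    exact Finset.prod_ne_zero_iff.mpr fun i _ => sub_ne_zero.mpr (hs i)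
  have h3 : (s • (1 : Matrix (Fin (n+2)) (Fin (n+2)) ℝ) - T).det ≠ 0 := by
    rw [← heval, hT, heval]; exact h1
  have h4 : T - s • (1 : Matrix (Fin (n+2)) (Fin (n+2)) ℝ)
      = -(s • (1 : Matrix (Fin (n+2)) (Fin (n+2)) ℝ) - T) := (neg_sub _ _).symm
  rw [h4, Matrix.det_neg]
  exact isUnit_iff_ne_zero.mpr (mul_ne_zero (pow_ne_zero _ (by norm_num)) h3)

lemma hess_mul_upper {X U : Matrix (Fin (n+2)) (Fin (n+2)) ℝ}
    (hX : ∀ i k : Fin (n+2), (k:ℕ)+1 < (i:ℕ) → X i k = 0)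
    (hU : ∀ k j : Fin (n+2), j < k → U k j = 0) :
    ∀ i j : Fin (n+2), (j:ℕ)+1 < (i:ℕ) → (X * U) i j = 0 := by
  intro i j h
  rw [Matrix.mul_apply]
  apply Finset.sum_eq_zero
  intro k _
  by_cases hk : (k:ℕ)+1 < (i:ℕ)
  · rw [hX i k hk, zero_mul]
  · have hjk : j < k := by
      have h2 := not_lt.mp hk
      rw [Fin.lt_def]; omega
    rw [hU k j hjk, mul_zero]

lemma upper_mul_hess {U X : Matrix (Fin (n+2)) (Fin (n+2)) ℝ}
    (hU : ∀ i k : Fin (n+2), k < i → U i k = 0)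
    (hX : ∀ k j : Fin (n+2), (j:ℕ)+1 < (k:ℕ) → X k j = 0) :
    ∀ i j : Fin (n+2), (j:ℕ)+1 < (i:ℕ) → (U * X) i j = 0 := by
  intro i j h
  rw [Matrix.mul_apply]
  apply Finset.sum_eq_zero
  intro k _
  by_cases hk : k < i
  · rw [hU i k hk, zero_mul]
  · have h2 := not_lt.mp hk
    rw [Fin.le_def] at h2
    rw [hX k j (by omega), mul_zero]

lemma sub_smul_one_hess {T : Matrix (Fin (n+2)) (Fin (n+2)) ℝ} {s : ℝ}
    (h : ∀ i j : Fin (n+2), (j:ℕ)+1 < (i:ℕ) → T i j = 0) :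
    ∀ i j : Fin (n+2), (j:ℕ)+1 < (i:ℕ) → (T - s • 1) i j = 0 := by
  intro i j hij
  have hne : i ≠ j := fun hh => by rw [hh] at hij; omega
  simp [Matrix.sub_apply, Matrix.smul_apply, Matrix.one_apply_ne hne, h i j hij]

lemma symtridiag_of {T : Matrix (Fin (n+2)) (Fin (n+2)) ℝ} (hsym : Tᵀ = T)
    (hh : ∀ i j : Fin (n+2), (j:ℕ)+1 < (i:ℕ) → T i j = 0) : SymTridiag T := by
  refine ⟨hsym, fun i j h => ?_⟩
  rcases h with h | h
  · calc T i j = Tᵀ j i := rfl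
      _ = T j i := by rw [hsym]
      _ = 0 := hh j i h
  · exact hh i j h

lemma Fs_eq {s : ℝ} {T Q R : Matrix (Fin (n+2)) (Fin (n+2)) ℝ}
    (hMdet : IsUnit (T - s • (1 : Matrix (Fin (n+2)) (Fin (n+2)) ℝ)).det)
    (h : IsQsRs (T - s • 1) Q R) : Fs s T = Qᵀ * T * Q := by
  have hex : ∃ Q' R', IsQsRs (T - s • (1 : Matrix (Fin (n+2)) (Fin (n+2)) ℝ)) Q' R' := ⟨Q, R, h⟩
  rw [Fs, dif_pos hex]
  have hspec := hex.choose_spec.choose_spec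
  have h2 := qsrs_unique hMdet hspec h
  rw [h2.1]

lemma Fs_step {lam : Fin (n+2) → ℝ} {s : ℝ} {T Q R : Matrix (Fin (n+2)) (Fin (n+2)) ℝ}
    (hT : T ∈ TSet lam) (hMdet : IsUnit (T - s • (1 : Matrix (Fin (n+2)) (Fin (n+2)) ℝ)).det)
    (h : IsQsRs (T - s • 1) Q R) :
    Qᵀ * T * Q ∈ TSet lam ∧ Qᵀ * T * Q - s • 1 = R * Q := by
  obtain ⟨⟨hsymT, htri⟩, hcp⟩ := hT
  obtain ⟨ho, hd, hu, hp, he⟩ := h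
  have hconj : Qᵀ * (T - s • 1) * Q = Qᵀ * T * Q - s • 1 := by
    rw [Matrix.mul_sub, Matrix.sub_mul, Matrix.mul_smul, Matrix.mul_one, Matrix.smul_mul, ho]
  have hRQ : Qᵀ * T * Q - s • 1 = R * Q := by
    rw [← hconj, he, ← Matrix.mul_assoc Qᵀ Q R, ho, Matrix.one_mul]
  have hdR : IsUnit R.det := by
    have h5 : (T - s • (1 : Matrix (Fin (n+2)) (Fin (n+2)) ℝ)).det = R.det := by
      rw [he, Matrix.det_mul, hd, one_mul]
    rwa [h5] at hMdet
  haveI : Invertible R := Matrix.invertibleOfIsUnitDet _ hdR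
  have hQhess : ∀ i k : Fin (n+2), (k:ℕ)+1 < (i:ℕ) → Q i k = 0 := by
    have hQe : Q = (T - s • 1) * R⁻¹ := by
      rw [he, Matrix.mul_inv_cancel_right_of_invertible]
    intro i k hik
    rw [hQe]
    exact hess_mul_upper (sub_smul_one_hess fun a b hab => htri a b (Or.inr hab))
      (fun a b hab => Matrix.blockTriangular_inv_of_blockTriangular (upper_bt hu) hab) i k hik
  have hhess : ∀ i j : Fin (n+2), (j:ℕ)+1 < (i:ℕ) → (Qᵀ * T * Q) i j = 0 := by
    intro i j hij
    have h7 : (R * Q) i j = 0 := upper_mul_hess hu hQhess i j hij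
    have h8 := congrArg (fun M : Matrix (Fin (n+2)) (Fin (n+2)) ℝ => M i j) hRQ
    simp only [Matrix.sub_apply, Matrix.smul_apply] at h8
    have hne : i ≠ j := fun hh => by rw [hh] at hij; omega
    rw [Matrix.one_apply_ne hne, h7] at h8
    simpa using h8
  have hsym' : (Qᵀ * T * Q)ᵀ = Qᵀ * T * Q := by
    rw [Matrix.transpose_mul, Matrix.transpose_mul, Matrix.transpose_transpose, hsymT,
      ← Matrix.mul_assoc]
  exact ⟨⟨symtridiag_of hsym' hhess, (charpoly_conj ho).trans hcp⟩, hRQ⟩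

lemma Fs_surj_step {lam : Fin (n+2) → ℝ} {s : ℝ} (hs : ∀ i, s ≠ lam i)
    {T' : Matrix (Fin (n+2)) (Fin (n+2)) ℝ} (hT' : T' ∈ TSet lam) :
    ∃ T ∈ TSet lam, Fs s T = T' := by
  have hM' : IsUnit (T' - s • (1 : Matrix (Fin (n+2)) (Fin (n+2)) ℝ)).det :=
    det_unit_of_charpoly hs hT'.2
  have hsymM : (T' - s • (1 : Matrix (Fin (n+2)) (Fin (n+2)) ℝ))ᵀ = T' - s • 1 := by
    rw [Matrix.transpose_sub, hT'.1.1, Matrix.transpose_smul, Matrix.transpose_one]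
  obtain ⟨R, Q, ho, hd, hu, hp, he⟩ := rq_exists hM' hsymM
  have ho' : Q * Qᵀ = 1 := mul_eq_one_comm.mp ho
  set T : Matrix (Fin (n+2)) (Fin (n+2)) ℝ := Q * T' * Qᵀ with hTdef
  have hTs : T - s • 1 = Q * R := by
    rw [hTdef]
    calc Q * T' * Qᵀ - s • 1 = Q * (T' - s • 1) * Qᵀ := by
          rw [Matrix.mul_sub, Matrix.sub_mul, Matrix.mul_smul, Matrix.mul_one,
            Matrix.smul_mul, ho']
      _ = Q * R := by
          rw [he, Matrix.mul_assoc Q (R * Q) Qᵀ, Matrix.mul_assoc R Q Qᵀ, ho',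
            Matrix.mul_one]
  have hQsRs : IsQsRs (T - s • 1) Q R := ⟨ho, hd, hu, hp, hTs⟩
  have hdR : IsUnit R.det := by
    have h5 : (T' - s • (1 : Matrix (Fin (n+2)) (Fin (n+2)) ℝ)).det = R.det := by
      rw [he, Matrix.det_mul, hd, mul_one]
    rwa [h5] at hM'
  have hTdet : IsUnit (T - s • (1 : Matrix (Fin (n+2)) (Fin (n+2)) ℝ)).det := by
    rw [hTs, Matrix.det_mul, hd, one_mul]; exact hdR
  haveI : Invertible R := Matrix.invertibleOfIsUnitDet _ hdR
  have hQhess : ∀ i k : Fin (n+2), (k:ℕ)+1 < (i:ℕ) → Q i k = 0 := by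
    have hQe : Q = R⁻¹ * (T' - s • 1) := by
      rw [he, Matrix.inv_mul_cancel_left_of_invertible]
    intro i k hik
    rw [hQe]
    exact upper_mul_hess
      (fun a b hab => Matrix.blockTriangular_inv_of_blockTriangular (upper_bt hu) hab)
      (sub_smul_one_hess fun a b hab => hT'.1.2 a b (Or.inr hab)) i k hik
  have hThess : ∀ i j : Fin (n+2), (j:ℕ)+1 < (i:ℕ) → T i j = 0 := by
    intro i j hij
    have h7 : (Q * R) i j = 0 := hess_mul_upper hQhess hu i j hij
    have h8 := congrArg (fun M : Matrix (Fin (n+2)) (Fin (n+2)) ℝ => M i j) hTs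
    simp only [Matrix.sub_apply, Matrix.smul_apply] at h8
    have hne : i ≠ j := fun hh => by rw [hh] at hij; omega
    rw [Matrix.one_apply_ne hne, h7] at h8
    simpa using h8
  have hTsym : Tᵀ = T := by
    rw [hTdef, Matrix.transpose_mul, Matrix.transpose_mul, Matrix.transpose_transpose,
      hT'.1.1, ← Matrix.mul_assoc]
  have hTcp : T.charpoly = (Matrix.diagonal lam).charpoly := by
    have h9 := charpoly_conj (Q := Qᵀ) (T := T')
      (by rw [Matrix.transpose_transpose]; exact ho')
    rw [Matrix.transpose_transpose] at h9
    rw [hTdef]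
    exact h9.trans hT'.2
  refine ⟨T, ⟨symtridiag_of hTsym hThess, hTcp⟩, ?_⟩
  rw [Fs_eq hTdet hQsRs, hTdef, ← Matrix.mul_assoc Qᵀ (Q * T') Qᵀ,
    ← Matrix.mul_assoc Qᵀ Q T', ho, Matrix.one_mul, Matrix.mul_assoc, ho, Matrix.mul_one]

end MainHelpers

theorem stmt6 (n : ℕ) (lam : Fin (n+2) → ℝ) (hlam : StrictMono lam)
    (s : ℝ) (hs : ∀ i : Fin (n+2), s ≠ lam i) :
    (∀ T ∈ TSet lam,
      IsUnit (T - s • (1 : Matrix (Fin (n+2)) (Fin (n+2)) ℝ)).det ∧ Fs s T ∈ TSet lam) ∧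
    Set.BijOn (Fs s) (TSet lam) (TSet lam) := by
  have hdet : ∀ T ∈ TSet lam, IsUnit (T - s • (1 : Matrix (Fin (n+2)) (Fin (n+2)) ℝ)).det :=
    fun T hT => det_unit_of_charpoly hs hT.2
  have hmaps : ∀ T ∈ TSet lam, Fs s T ∈ TSet lam := by
    intro T hT
    obtain ⟨Q, R, h⟩ := exists_isQsRs (hdet T hT)
    rw [Fs_eq (hdet T hT) h]
    exact (Fs_step hT (hdet T hT) h).1
  refine ⟨fun T hT => ⟨hdet T hT, hmaps T hT⟩, fun T hT => hmaps T hT, ?_, ?_⟩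
  · intro T1 h1 T2 h2 heq
    obtain ⟨Q1, R1, hq1⟩ := exists_isQsRs (hdet T1 h1)
    obtain ⟨Q2, R2, hq2⟩ := exists_isQsRs (hdet T2 h2)
    have s1 := Fs_step h1 (hdet T1 h1) hq1
    have s2 := Fs_step h2 (hdet T2 h2) hq2
    have e1 : Fs s T1 = Q1ᵀ * T1 * Q1 := Fs_eq (hdet T1 h1) hq1
    have e2 : Fs s T2 = Q2ᵀ * T2 * Q2 := Fs_eq (hdet T2 h2) hq2
    have hF1 : Fs s T1 - s • 1 = R1 * Q1 := by rw [e1]; exact s1.2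
    have hF2 : Fs s T2 - s • 1 = R2 * Q2 := by rw [e2]; exact s2.2
    have hR : R1 * Q1 = R2 * Q2 := by rw [← hF1, ← hF2, heq]
    have hdetRQ : IsUnit (R1 * Q1).det := by
      rw [← hF1]
      exact hdet _ (hmaps T1 h1)
    obtain ⟨ho1, hd1, hu1, hp1, hqr1⟩ := hq1
    obtain ⟨ho2, hd2, hu2, hp2, hqr2⟩ := hq2
    obtain ⟨hQeq, hReq⟩ := rq_unique hdetRQ ho1 hd1 hu1 hp1 ho2 hd2 hu2 hp2 hR
    have h10 : T1 - s • (1 : Matrix (Fin (n+2)) (Fin (n+2)) ℝ) = T2 - s • 1 := by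
      rw [hqr1, hqr2, hQeq, hReq]
    exact sub_left_inj.mp h10
  · intro T' hT'
    obtain ⟨T, hT, hF⟩ := Fs_surj_step hs hT'
    exact ⟨T, hT, hF⟩
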